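/- Let α be a complex number with |α| ≥ 1 and let C : ℕ → ℂ satisfy the single-mode squeezing recurrence (C 1 = 0 and √(n+1) · C (n+1) = α · √n · C (n-1) for all n ≥ 1). If Σₙ |C n|² < ∞ (square-summability), then C n = 0 for every n. Equivalently, a nonzero normalizable solution of the annihilation condition (a − α a†)|ψ⟩ = 0 exists only if |α| < 1. -/

import Mathlib

/-- A nonzero normalizable solution of the single-mode annihilation condition
exists only for `|α| < 1`: if `|α| ≥ 1` and `Σₙ |C n|²` converges, then `C ≡ 0`. -/
theorem single_mode_no_normalizable_solution (α : ℂ) (hα : 1 ≤ ‖α‖) (C : ℕ → ℂ)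
    (h1 : C 1 = 0)
    (hrec : ∀ n : ℕ, 1 ≤ n →
      (Real.sqrt (n + 1) : ℂ) * C (n + 1) = α * (Real.sqrt n : ℂ) * C (n - 1))
    (hsum : Summable (fun n : ℕ => ‖C n‖ ^ 2)) :
    ∀ n : ℕ, C n = 0 := by
  have key : ∀ n : ℕ, 1 ≤ n →
      ((n : ℝ) + 1) * ‖C (n + 1)‖ ^ 2
        = ‖α‖ ^ 2 * n * ‖C (n - 1)‖ ^ 2 := by
    intro n hn
    have h := congrArg (fun z => ‖z‖ ^ 2) (hrec n hn)
    simp only [norm_mul, Complex.norm_real, Real.norm_eq_abs, mul_pow,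
      abs_of_nonneg (Real.sqrt_nonneg _),
      Real.sq_sqrt (by positivity : (0:ℝ) ≤ (n:ℝ) + 1),
      Real.sq_sqrt (by positivity : (0:ℝ) ≤ (n:ℝ))] at h
    linarith [h]
  have hα2 : 1 ≤ ‖α‖ ^ 2 := by nlinarith
  -- lower bound for even coefficients
  have lb : ∀ k : ℕ, ‖C 0‖ ^ 2 / (2 * ((k : ℝ) + 1))
      ≤ ‖C (2 * k)‖ ^ 2 := by
    intro k
    induction k with
    | zero =>
      simp only [Nat.mul_zero, Nat.cast_zero]
      have : (0:ℝ) ≤ ‖C 0‖ ^ 2 := by positivity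
      linarith
    | succ k ih =>
      have hk := key (2 * k + 1) (by omega)
      have he : 2 * k + 1 + 1 = 2 * (k + 1) := by ring
      have he2 : 2 * k + 1 - 1 = 2 * k := by omega
      rw [he, he2] at hk
      have hcast : ((2 * k + 1 : ℕ) : ℝ) = 2 * (k : ℝ) + 1 := by push_cast; ring
      rw [hcast] at hk
      have hnn : (0:ℝ) ≤ ‖C (2 * k)‖ ^ 2 := by positivity
      have h0 : (0:ℝ) ≤ ‖C 0‖ ^ 2 := by positivity
      have hk2 : (2 * (k : ℝ) + 1) * ‖C (2 * k)‖ ^ 2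
          ≤ (2 * (k : ℝ) + 1 + 1) * ‖C (2 * (k + 1))‖ ^ 2 := by
        nlinarith [mul_nonneg (mul_nonneg (sub_nonneg.mpr hα2)
          (by positivity : (0:ℝ) ≤ 2 * (k:ℝ) + 1)) hnn]
      have hkpos : (0:ℝ) < 2 * ((k : ℝ) + 1) := by positivity
      have hkpos2 : (0:ℝ) < 2 * (((k : ℝ) + 1) + 1) := by positivity
      rw [div_le_iff₀ hkpos] at ih
      rw [Nat.cast_succ, div_le_iff₀ hkpos2]
      nlinarith
  -- C 0 = 0
  have hC0 : C 0 = 0 := by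
    by_contra h0
    have hpos : 0 < ‖C 0‖ ^ 2 := by
      have := norm_pos_iff.mpr h0; positivity
    have hsub : Summable (fun k : ℕ => ‖C (2 * k)‖ ^ 2) :=
      hsum.comp_injective (fun a b hab => by omega)
    have hsum2 : Summable (fun k : ℕ => ‖C 0‖ ^ 2 / (2 * ((k : ℝ) + 1))) :=
      Summable.of_nonneg_of_le (fun k => by positivity) lb hsub
    have hsum3 : Summable (fun k : ℕ => 1 / ((k : ℝ) + 1)) := by
      have := hsum2.mul_left (2 / ‖C 0‖ ^ 2)
      refine this.congr fun k => ?_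
      field_simp
    have : Summable (fun k : ℕ => 1 / (k : ℝ)) := by
      rw [← summable_nat_add_iff 1]
      exact hsum3.congr fun k => by push_cast; ring_nf
    exact Real.not_summable_one_div_natCast this
  -- all even are zero
  have heven : ∀ k : ℕ, C (2 * k) = 0 := by
    intro k
    induction k with
    | zero => simpa using hC0
    | succ k ih =>
      have hk := hrec (2 * k + 1) (by omega)
      have he2 : 2 * k + 1 - 1 = 2 * k := by omega
      rw [he2, ih, mul_zero] at hk
      have : C (2 * k + 1 + 1) = 0 := by
        rcases mul_eq_zero.mp hk with h | h
        · exfalso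
          rw [Complex.ofReal_eq_zero] at h
          have hp : (0:ℝ) < Real.sqrt (((2*k+1:ℕ):ℝ) + 1) :=
            Real.sqrt_pos.mpr (by positivity)
          linarith
        · exact h
      simpa [show 2 * k + 1 + 1 = 2 * (k + 1) by ring] using this
  -- all odd are zero
  have hodd : ∀ k : ℕ, C (2 * k + 1) = 0 := by
    intro k
    induction k with
    | zero => simpa using h1
    | succ k ih =>
      have hk := hrec (2 * k + 2) (by omega)
      have he2 : 2 * k + 2 - 1 = 2 * k + 1 := by omega
      rw [he2, ih, mul_zero] at hk
      have : C (2 * k + 2 + 1) = 0 := by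
        rcases mul_eq_zero.mp hk with h | h
        · exfalso
          rw [Complex.ofReal_eq_zero] at h
          have hp : (0:ℝ) < Real.sqrt (((2*k+2:ℕ):ℝ) + 1) :=
            Real.sqrt_pos.mpr (by positivity)
          linarith
        · exact h
      simpa [show 2 * k + 2 + 1 = 2 * (k + 1) + 1 by ring] using this
  intro n
  rcases Nat.even_or_odd n with ⟨k, hk⟩ | ⟨k, hk⟩
  · rw [hk, ← two_mul]; exact heven k
  · rw [hk]; exact hodd k
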